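/- Fix N ≥ 1, α > 1/2, and β ≥ 0 with θ = tanh β. The quenched pressure A_N(α,β) = (1/N)·E[ln Z_N(α,β)] is differentiable in β with ∂A_N/∂β = α · E[ (1/N²) Σ_{i,j ∈ Fin N} (ω(σ_i σ_j) + θ)/(1 + θ·ω(σ_i σ_j)) ], where ω is the Gibbs expectation of the realization and E the quenched expectation at connectivity α. -/

import Mathlib

open scoped BigOperators

/-- The set of spin values `{-1, 1}` as a finite subset of `ℝ`. -/
noncomputable abbrev SpinVal : Finset ℝ := {-1, 1}

/-- Spin configurations on `n` sites: maps `Fin n → ℝ` taking values in `{-1,1}`. -/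
abbrev Conf (n : ℕ) := Fin n → SpinVal

/-- Hamiltonian of the diluted ferromagnet for the disorder realization `(k, b)`:
`H(σ) = -Σ_{ν<k} σ_{(bν).1} σ_{(bν).2}`. -/
noncomputable def Hdil {n k : ℕ} (b : Fin k → Fin n × Fin n) (σ : Conf n) : ℝ :=
  - ∑ ν : Fin k, (σ (b ν).1 : ℝ) * (σ (b ν).2 : ℝ)

/-- Partition function of the diluted ferromagnet at inverse temperature `β`. -/
noncomputable def Zdil (n : ℕ) (β : ℝ) {k : ℕ} (b : Fin k → Fin n × Fin n) : ℝ :=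
  ∑ σ : Conf n, Real.exp (-β * Hdil b σ)

/-- Gibbs expectation `ω` of an observable for a fixed disorder realization. -/
noncomputable def gibbs (n : ℕ) (β : ℝ) {k : ℕ} (b : Fin k → Fin n × Fin n)
    (f : Conf n → ℝ) : ℝ :=
  (∑ σ : Conf n, f σ * Real.exp (-β * Hdil b σ)) / Zdil n β b

/-- The Poisson probability mass function with mean `lam`. -/
noncomputable def poissonPMF (lam : ℝ) (k : ℕ) : ℝ :=
  Real.exp (-lam) * lam ^ k / (Nat.factorial k : ℝ)

/-- Quenched expectation at connectivity `α` on `n` sites: the number of bonds `k` is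
Poisson(αn) and the `2k` endpoints are i.i.d. uniform on the `n` sites. -/
noncomputable def quenched (n : ℕ) (α : ℝ)
    (F : (k : ℕ) → (Fin k → Fin n × Fin n) → ℝ) : ℝ :=
  ∑' k : ℕ, poissonPMF (α * n) k *
    ((∑ b : Fin k → Fin n × Fin n, F k b) / ((n : ℝ) ^ 2) ^ k)

/-- Boltzmann weight of the `t`-perturbed (cavity) system with realization
`(k, b, k', l)`: `exp(β Σ_ν σσ + β Σ_μ σ_{l μ})`. -/
noncomputable def cavWeight (n : ℕ) (β : ℝ) {k k' : ℕ} (b : Fin k → Fin n × Fin n)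
    (l : Fin k' → Fin n) (σ : Conf n) : ℝ :=
  Real.exp (β * ∑ ν : Fin k, (σ (b ν).1 : ℝ) * (σ (b ν).2 : ℝ)
    + β * ∑ μ : Fin k', (σ (l μ) : ℝ))

/-- Partition function of the `t`-perturbed (cavity) system. -/
noncomputable def Zcav (n : ℕ) (β : ℝ) {k k' : ℕ} (b : Fin k → Fin n × Fin n)
    (l : Fin k' → Fin n) : ℝ :=
  ∑ σ : Conf n, cavWeight n β b l σ

/-- Gibbs expectation `ω_t` of the `t`-perturbed (cavity) system at fixed realization. -/
noncomputable def gibbsCav (n : ℕ) (β : ℝ) {k k' : ℕ} (b : Fin k → Fin n × Fin n)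
    (l : Fin k' → Fin n) (f : Conf n → ℝ) : ℝ :=
  (∑ σ : Conf n, f σ * cavWeight n β b l σ) / Zcav n β b l

/-- Quenched expectation `E_t` of the `t`-perturbed system at connectivity `αt`:
`k` is Poisson(αt·n), `k'` is Poisson(2·αt·t), and all indices are i.i.d. uniform. -/
noncomputable def quenchedCav (n : ℕ) (αt t : ℝ)
    (F : (k : ℕ) → (Fin k → Fin n × Fin n) → (k' : ℕ) → (Fin k' → Fin n) → ℝ) : ℝ :=
  ∑' k : ℕ, ∑' k' : ℕ, poissonPMF (αt * n) k * poissonPMF (2 * αt * t) k' *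
    ((∑ b : Fin k → Fin n × Fin n, ∑ l : Fin k' → Fin n, F k b k' l) /
      (((n : ℝ) ^ 2) ^ k * (n : ℝ) ^ k'))

/-- The cavity function `Ψ_n(α̃, β; t) = E_t[ln Z_{n,t}] - E[ln Z_n(α̃, β)]`. -/
noncomputable def Psi (n : ℕ) (αt β t : ℝ) : ℝ :=
  quenchedCav n αt t (fun _ b _ l => Real.log (Zcav n β b l))
    - quenched n αt (fun _ b => Real.log (Zdil n β b))

lemma spinval_cases (x : SpinVal) : (x : ℝ) = 1 ∨ (x : ℝ) = -1 := by
  have h := x.2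
  simp only [SpinVal, Finset.mem_insert, Finset.mem_singleton] at h
  tauto

instance confNonempty (n : ℕ) : Nonempty (Conf n) :=
  ⟨fun _ => ⟨1, by simp⟩⟩

lemma Zdil_pos (n : ℕ) (β : ℝ) {k : ℕ} (b : Fin k → Fin n × Fin n) :
    0 < Zdil n β b :=
  Finset.sum_pos (fun _ _ => Real.exp_pos _) Finset.univ_nonempty

lemma gibbs_abs_le (n : ℕ) (β : ℝ) {k : ℕ} (b : Fin k → Fin n × Fin n)
    {f : Conf n → ℝ} {M : ℝ} (hf : ∀ σ, |f σ| ≤ M) :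
    |gibbs n β b f| ≤ M := by
  have hZ := Zdil_pos n β b
  rw [gibbs, abs_div, abs_of_pos hZ, div_le_iff₀ hZ]
  calc |∑ σ : Conf n, f σ * Real.exp (-β * Hdil b σ)|
      ≤ ∑ σ : Conf n, |f σ * Real.exp (-β * Hdil b σ)| := Finset.abs_sum_le_sum_abs _ _
    _ ≤ ∑ σ : Conf n, M * Real.exp (-β * Hdil b σ) := by
        refine Finset.sum_le_sum fun σ _ => ?_
        rw [abs_mul, abs_of_pos (Real.exp_pos _)]
        exact mul_le_mul_of_nonneg_right (hf σ) (Real.exp_pos _).le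
    _ = M * Zdil n β b := by rw [Zdil, Finset.mul_sum]

lemma Hdil_abs_le (n k : ℕ) (b : Fin k → Fin n × Fin n) (σ : Conf n) :
    |Hdil b σ| ≤ k := by
  rw [Hdil, abs_neg]
  calc |∑ ν : Fin k, (σ (b ν).1 : ℝ) * (σ (b ν).2 : ℝ)|
      ≤ ∑ ν : Fin k, |(σ (b ν).1 : ℝ) * (σ (b ν).2 : ℝ)| := Finset.abs_sum_le_sum_abs _ _
    _ ≤ ∑ _ν : Fin k, (1 : ℝ) := by
        refine Finset.sum_le_sum fun ν _ => ?_
        rcases spinval_cases (σ (b ν).1) with h1 | h1 <;>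
          rcases spinval_cases (σ (b ν).2) with h2 | h2 <;> rw [h1, h2] <;> norm_num
    _ = k := by simp

lemma gibbs_sum (n : ℕ) (β : ℝ) {k : ℕ} (b : Fin k → Fin n × Fin n)
    {ι : Type*} (s : Finset ι) (f : ι → Conf n → ℝ) :
    gibbs n β b (fun σ => ∑ i ∈ s, f i σ) = ∑ i ∈ s, gibbs n β b (f i) := by
  simp only [gibbs]
  rw [← Finset.sum_div]
  congr 1
  simp_rw [Finset.sum_mul]
  exact Finset.sum_comm

lemma hasDerivAt_logZ (n : ℕ) (β : ℝ) {k : ℕ} (b : Fin k → Fin n × Fin n) :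
    HasDerivAt (fun β' => Real.log (Zdil n β' b))
      (gibbs n β b (fun σ => -Hdil b σ)) β := by
  have hZ : HasDerivAt (fun β' => Zdil n β' b)
      (∑ σ : Conf n, (-Hdil b σ) * Real.exp (-β * Hdil b σ)) β := by
    refine HasDerivAt.fun_sum fun σ _ => ?_
    have h1 : HasDerivAt (fun β' : ℝ => -β' * Hdil b σ) (-Hdil b σ) β := by
      simpa using ((hasDerivAt_id β).neg.mul_const (Hdil b σ))
    simpa [mul_comm] using h1.exp
  have := hZ.log (Zdil_pos n β b).ne'
  simpa [gibbs, Zdil] using this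
lemma poissonPMF_nonneg {lam : ℝ} (hl : 0 ≤ lam) (k : ℕ) : 0 ≤ poissonPMF lam k := by
  unfold poissonPMF
  positivity

lemma summable_poissonPMF (lam : ℝ) : Summable (poissonPMF lam) := by
  have := (Real.summable_pow_div_factorial lam).mul_left (Real.exp (-lam))
  refine this.congr fun k => ?_
  rw [poissonPMF, mul_div_assoc]

lemma poissonPMF_succ_mul (lam : ℝ) (k : ℕ) :
    poissonPMF lam (k + 1) * ((k : ℝ) + 1) = lam * poissonPMF lam k := by
  unfold poissonPMF
  rw [Nat.factorial_succ]
  have h1 : ((k + 1) * Nat.factorial k : ℕ) ≠ 0 := by positivity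
  have h2 : (Nat.factorial k : ℝ) ≠ 0 := by positivity
  push_cast
  field_simp
  ring

lemma summable_poissonPMF_mul (lam : ℝ) :
    Summable (fun k => poissonPMF lam k * k) := by
  rw [← summable_nat_add_iff 1]
  refine ((summable_poissonPMF lam).mul_left lam).congr fun k => ?_
  push_cast
  rw [poissonPMF_succ_mul]

lemma abs_tanh_lt_one (x : ℝ) : |Real.tanh x| < 1 := by
  have hc := Real.cosh_pos x
  have h1 : Real.sinh x < Real.cosh x := Real.sinh_lt_cosh x
  have h2 : -Real.cosh x < Real.sinh x := by
    have := Real.sinh_lt_cosh (-x)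
    rw [Real.sinh_neg, Real.cosh_neg] at this
    linarith
  rw [Real.tanh_eq_sinh_div_cosh, abs_div, abs_of_pos hc, div_lt_one hc, abs_lt]
  exact ⟨h2, h1⟩

lemma exp_spin (β θ : ℝ) (hθ : θ = Real.tanh β) {s : ℝ} (hs : s = 1 ∨ s = -1) :
    Real.exp (β * s) = Real.cosh β * (1 + θ * s) := by
  subst hθ
  have hc := (Real.cosh_pos β).ne'
  rcases hs with h | h <;> subst h
  · rw [Real.tanh_eq_sinh_div_cosh, mul_one, ← Real.cosh_add_sinh]
    field_simp
  · rw [Real.tanh_eq_sinh_div_cosh, mul_comm β (-1), neg_one_mul, ← Real.cosh_sub_sinh]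
    field_simp
    rw [← sub_eq_add_neg, Real.cosh_sub_sinh]
lemma gibbs_insertNth (N : ℕ) (β θ : ℝ) (hθ : θ = Real.tanh β) {k : ℕ}
    (ν : Fin (k + 1)) (p : Fin N × Fin N) (b' : Fin k → Fin N × Fin N) :
    gibbs N β (ν.insertNth p b') (fun σ => (σ p.1 : ℝ) * (σ p.2 : ℝ))
      = (gibbs N β b' (fun σ => (σ p.1 : ℝ) * (σ p.2 : ℝ)) + θ) /
        (1 + θ * gibbs N β b' (fun σ => (σ p.1 : ℝ) * (σ p.2 : ℝ))) := by
  set c : Fin (k + 1) → Fin N × Fin N := ν.insertNth p b' with hc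
  set s : Conf N → ℝ := fun σ => (σ p.1 : ℝ) * (σ p.2 : ℝ) with hs_def
  have hs : ∀ σ, s σ = 1 ∨ s σ = -1 := by
    intro σ
    rcases spinval_cases (σ p.1) with h1 | h1 <;> rcases spinval_cases (σ p.2) with h2 | h2 <;>
      simp [hs_def, h1, h2]
  have hH : ∀ σ : Conf N, Hdil c σ = -(s σ) + Hdil b' σ := by
    intro σ
    simp only [Hdil]
    rw [Fin.sum_univ_succAbove (fun μ => (σ (c μ).1 : ℝ) * (σ (c μ).2 : ℝ)) ν]
    simp only [hc, Fin.insertNth_apply_same, Fin.insertNth_apply_succAbove, hs_def]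
    ring
  have hexp : ∀ σ : Conf N, Real.exp (-β * Hdil c σ)
      = (Real.cosh β * (1 + θ * s σ)) * Real.exp (-β * Hdil b' σ) := by
    intro σ
    rw [hH σ, show -β * (-(s σ) + Hdil b' σ) = β * s σ + -β * Hdil b' σ by ring,
      Real.exp_add, exp_spin β θ hθ (hs σ)]
  set Z' := Zdil N β b' with hZ'
  set A := ∑ σ : Conf N, s σ * Real.exp (-β * Hdil b' σ) with hA
  have hZpos : 0 < Z' := Zdil_pos N β b'
  have hnum : ∑ σ : Conf N, s σ * Real.exp (-β * Hdil c σ)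
      = Real.cosh β * (A + θ * Z') := by
    calc ∑ σ : Conf N, s σ * Real.exp (-β * Hdil c σ)
        = ∑ σ : Conf N, (Real.cosh β * (s σ * Real.exp (-β * Hdil b' σ))
            + (Real.cosh β * θ) * Real.exp (-β * Hdil b' σ)) := by
          refine Finset.sum_congr rfl fun σ _ => ?_
          rw [hexp σ]
          rcases hs σ with h | h <;> rw [h] <;> ring
      _ = Real.cosh β * (A + θ * Z') := by
          rw [Finset.sum_add_distrib, ← Finset.mul_sum, ← Finset.mul_sum, hA, hZ', Zdil]
          ring
  have hden : Zdil N β c = Real.cosh β * (Z' + θ * A) := by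
    calc Zdil N β c
        = ∑ σ : Conf N, (Real.cosh β * Real.exp (-β * Hdil b' σ)
            + (Real.cosh β * θ) * (s σ * Real.exp (-β * Hdil b' σ))) := by
          rw [Zdil]
          refine Finset.sum_congr rfl fun σ _ => ?_
          rw [hexp σ]
          ring
      _ = Real.cosh β * (Z' + θ * A) := by
          rw [Finset.sum_add_distrib, ← Finset.mul_sum, ← Finset.mul_sum, hA, hZ', Zdil]
          ring
  have hgibbs_eq : gibbs N β b' s = A / Z' := rfl
  have hωle : |A / Z'| ≤ 1 := by
    rw [← hgibbs_eq]
    refine gibbs_abs_le N β b' fun σ => ?_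
    rcases hs σ with h | h <;> rw [h] <;> norm_num
  have hθ1 : |θ| < 1 := hθ ▸ abs_tanh_lt_one β
  have h1 : 0 < 1 + θ * (A / Z') := by
    have habs : |θ * (A / Z')| < 1 := by
      rw [abs_mul]
      calc |θ| * |A / Z'| ≤ |θ| * 1 := by
            exact mul_le_mul_of_nonneg_left hωle (abs_nonneg θ)
        _ < 1 := by rw [mul_one]; exact hθ1
    have := (abs_lt.mp habs).1
    linarith
  have h2 : 0 < Z' + θ * A := by
    have heq : Z' + θ * A = Z' * (1 + θ * (A / Z')) := by
      field_simp
    rw [heq]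
    exact mul_pos hZpos h1
  rw [gibbs, hnum, hden, hgibbs_eq,
    mul_div_mul_left _ _ (Real.cosh_pos β).ne',
    div_eq_div_iff h2.ne' h1.ne']
  field_simp
lemma sum_gibbs_succ (N : ℕ) (β θ : ℝ) (hθ : θ = Real.tanh β) (k : ℕ) :
    ∑ b : Fin (k + 1) → Fin N × Fin N, gibbs N β b (fun σ => -Hdil b σ)
      = ((k : ℝ) + 1) * ∑ b : Fin k → Fin N × Fin N, ∑ i : Fin N, ∑ j : Fin N,
          (gibbs N β b (fun σ => (σ i : ℝ) * (σ j : ℝ)) + θ) /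
            (1 + θ * gibbs N β b (fun σ => (σ i : ℝ) * (σ j : ℝ))) := by
  have step1 : ∀ b : Fin (k + 1) → Fin N × Fin N,
      gibbs N β b (fun σ => -Hdil b σ)
        = ∑ ν : Fin (k + 1), gibbs N β b (fun σ => (σ (b ν).1 : ℝ) * (σ (b ν).2 : ℝ)) := by
    intro b
    rw [← gibbs_sum]
    congr 1
    funext σ
    simp [Hdil]
  have step2 : ∀ ν : Fin (k + 1),
      (∑ b : Fin (k + 1) → Fin N × Fin N,
        gibbs N β b (fun σ => (σ (b ν).1 : ℝ) * (σ (b ν).2 : ℝ)))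
      = ∑ b : Fin k → Fin N × Fin N, ∑ i : Fin N, ∑ j : Fin N,
          (gibbs N β b (fun σ => (σ i : ℝ) * (σ j : ℝ)) + θ) /
            (1 + θ * gibbs N β b (fun σ => (σ i : ℝ) * (σ j : ℝ))) := by
    intro ν
    rw [← Equiv.sum_comp (Fin.insertNthEquiv (fun _ => Fin N × Fin N) ν)
      (fun b => gibbs N β b (fun σ => (σ (b ν).1 : ℝ) * (σ (b ν).2 : ℝ)))]
    rw [Fintype.sum_prod_type, Finset.sum_comm]
    refine Finset.sum_congr rfl fun b _ => ?_
    rw [Fintype.sum_prod_type]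
    refine Finset.sum_congr rfl fun i _ => Finset.sum_congr rfl fun j _ => ?_
    have he : (Fin.insertNthEquiv (fun _ => Fin N × Fin N) ν) ((i, j), b)
        = ν.insertNth (i, j) b := rfl
    rw [he, Fin.insertNth_apply_same]
    exact gibbs_insertNth N β θ hθ ν (i, j) b
  calc ∑ b : Fin (k + 1) → Fin N × Fin N, gibbs N β b (fun σ => -Hdil b σ)
      = ∑ b : Fin (k + 1) → Fin N × Fin N, ∑ ν : Fin (k + 1),
          gibbs N β b (fun σ => (σ (b ν).1 : ℝ) * (σ (b ν).2 : ℝ)) :=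
        Finset.sum_congr rfl fun b _ => step1 b
    _ = ∑ ν : Fin (k + 1), ∑ b : Fin (k + 1) → Fin N × Fin N,
          gibbs N β b (fun σ => (σ (b ν).1 : ℝ) * (σ (b ν).2 : ℝ)) := Finset.sum_comm
    _ = ∑ _ν : Fin (k + 1), ∑ b : Fin k → Fin N × Fin N, ∑ i : Fin N, ∑ j : Fin N,
          (gibbs N β b (fun σ => (σ i : ℝ) * (σ j : ℝ)) + θ) /
            (1 + θ * gibbs N β b (fun σ => (σ i : ℝ) * (σ j : ℝ))) :=
        Finset.sum_congr rfl fun ν _ => step2 ν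
    _ = ((k : ℝ) + 1) * _ := by
        rw [Finset.sum_const, Finset.card_univ, Fintype.card_fin, nsmul_eq_mul]
        push_cast
        ring
noncomputable def gAux (N : ℕ) (α : ℝ) (k : ℕ) (y : ℝ) : ℝ :=
  poissonPMF (α * N) k *
    ((∑ b : Fin k → Fin N × Fin N, Real.log (Zdil N y b)) / ((N : ℝ) ^ 2) ^ k)

noncomputable def gAux' (N : ℕ) (α : ℝ) (k : ℕ) (y : ℝ) : ℝ :=
  poissonPMF (α * N) k *
    ((∑ b : Fin k → Fin N × Fin N, gibbs N y b (fun σ => -Hdil b σ)) / ((N : ℝ) ^ 2) ^ k)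

/-- **Internal-energy formula (finite `N`, exact form).** With `θ = tanh β`, the
quenched pressure `A_N(α,β) = (1/N)·E[ln Z_N(α,β)]` is differentiable in `β` with
`∂A_N/∂β = α·E[(1/N²) Σ_{i,j} (ω(σ_iσ_j) + θ)/(1 + θ·ω(σ_iσ_j))]`. -/
theorem pressure_hasDerivAt_beta (N : ℕ) (hN : 1 ≤ N) (α : ℝ) (hα : 1 / 2 < α)
    (β : ℝ) (hβ : 0 ≤ β) (θ : ℝ) (hθ : θ = Real.tanh β) :
    HasDerivAt (fun β' : ℝ =>
        (1 / (N : ℝ)) * quenched N α (fun _ b => Real.log (Zdil N β' b)))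
      (α * quenched N α (fun _ b =>
        (1 / (N : ℝ) ^ 2) * ∑ i : Fin N, ∑ j : Fin N,
          (gibbs N β b (fun σ => (σ i : ℝ) * (σ j : ℝ)) + θ) /
            (1 + θ * gibbs N β b (fun σ => (σ i : ℝ) * (σ j : ℝ)))))
      β := by
  have hN0 : (0 : ℝ) < N := by exact_mod_cast Nat.lt_of_lt_of_le Nat.zero_lt_one hN
  have hNe : (N : ℝ) ≠ 0 := hN0.ne'
  have hα0 : (0 : ℝ) < α := lt_trans (by norm_num) hα
  have hlam0 : (0 : ℝ) ≤ α * N := (mul_pos hα0 hN0).le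
  have hpow_pos : ∀ k : ℕ, (0 : ℝ) < ((N : ℝ) ^ 2) ^ k := fun k => by positivity
  have hcard : ∀ k : ℕ, ((Fintype.card (Fin k → Fin N × Fin N) : ℕ) : ℝ)
      = ((N : ℝ) ^ 2) ^ k := by
    intro k
    simp only [Fintype.card_fun, Fintype.card_prod, Fintype.card_fin]
    push_cast
    ring
  have hu : Summable (fun k => poissonPMF (α * N) k * k) := summable_poissonPMF_mul _
  have hg : ∀ (k : ℕ) (y : ℝ), HasDerivAt (gAux N α k) (gAux' N α k y) y := by
    intro k y
    unfold gAux gAux'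
    exact ((HasDerivAt.fun_sum fun b _ => hasDerivAt_logZ N y b).div_const _).const_mul _
  have hgibbs_bd : ∀ (k : ℕ) (y : ℝ) (b : Fin k → Fin N × Fin N),
      |gibbs N y b (fun σ => -Hdil b σ)| ≤ (k : ℝ) := by
    intro k y b
    refine gibbs_abs_le N y b fun σ => ?_
    rw [abs_neg]
    exact Hdil_abs_le N k b σ
  have hgbound : ∀ (k : ℕ) (y : ℝ), ‖gAux' N α k y‖ ≤ poissonPMF (α * N) k * k := by
    intro k y
    rw [Real.norm_eq_abs]
    unfold gAux'
    rw [abs_mul, abs_of_nonneg (poissonPMF_nonneg hlam0 k)]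
    refine mul_le_mul_of_nonneg_left ?_ (poissonPMF_nonneg hlam0 k)
    rw [abs_div, abs_of_pos (hpow_pos k), div_le_iff₀ (hpow_pos k)]
    calc |∑ b : Fin k → Fin N × Fin N, gibbs N y b (fun σ => -Hdil b σ)|
        ≤ ∑ b : Fin k → Fin N × Fin N, |gibbs N y b (fun σ => -Hdil b σ)| :=
          Finset.abs_sum_le_sum_abs _ _
      _ ≤ ∑ _b : Fin k → Fin N × Fin N, (k : ℝ) :=
          Finset.sum_le_sum fun b _ => hgibbs_bd k y b
      _ = (k : ℝ) * ((N : ℝ) ^ 2) ^ k := by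
          rw [Finset.sum_const, Finset.card_univ, nsmul_eq_mul, hcard]
          ring
  have hg0 : Summable fun k => gAux N α k 0 := by
    have heq : ∀ k, gAux N α k 0
        = poissonPMF (α * N) k * Real.log (Fintype.card (Conf N)) := by
      intro k
      unfold gAux
      have hZ : ∀ b : Fin k → Fin N × Fin N, Zdil N 0 b = (Fintype.card (Conf N) : ℝ) := by
        intro b
        simp [Zdil]
      simp only [hZ, Finset.sum_const, Finset.card_univ, nsmul_eq_mul, hcard]
      rw [mul_comm ((((N:ℝ)^2)^k)) (Real.log _), mul_div_assoc, div_self (hpow_pos k).ne', mul_one]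
    exact ((summable_poissonPMF _).mul_right _).congr fun k => (heq k).symm
  have H1 : HasDerivAt (fun y => ∑' k, gAux N α k y) (∑' k, gAux' N α k β) β :=
    hasDerivAt_tsum hu hg hgbound hg0 β
  have H2 : HasDerivAt (fun y => (1 / (N : ℝ)) * ∑' k, gAux N α k y)
      ((1 / (N : ℝ)) * ∑' k, gAux' N α k β) β := H1.const_mul _
  have hsumm' : Summable fun k => gAux' N α k β :=
    Summable.of_norm_bounded hu fun k => hgbound k β
  have h0 : gAux' N α 0 β = 0 := by
    unfold gAux'
    have hz : ∀ b : Fin 0 → Fin N × Fin N,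
        gibbs N β b (fun σ => -Hdil b σ) = 0 := by
      intro b
      have he : (fun σ : Conf N => -Hdil b σ) = fun _ => (0 : ℝ) := by
        funext σ
        simp [Hdil]
      rw [he]
      simp [gibbs]
    simp [hz]
  have hkey : ∀ k : ℕ, (1 / (N : ℝ)) * gAux' N α (k + 1) β
      = α * (poissonPMF (α * N) k *
          ((∑ b : Fin k → Fin N × Fin N, (1 / (N : ℝ) ^ 2) * ∑ i : Fin N, ∑ j : Fin N,
            (gibbs N β b (fun σ => (σ i : ℝ) * (σ j : ℝ)) + θ) /
              (1 + θ * gibbs N β b (fun σ => (σ i : ℝ) * (σ j : ℝ)))) / ((N : ℝ) ^ 2) ^ k)) := by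
    intro k
    unfold gAux'
    rw [sum_gibbs_succ N β θ hθ k, ← Finset.mul_sum]
    have hp := poissonPMF_succ_mul (α * N) k
    rw [pow_succ]
    set S := ∑ b : Fin k → Fin N × Fin N, ∑ i : Fin N, ∑ j : Fin N,
        (gibbs N β b (fun σ => (σ i : ℝ) * (σ j : ℝ)) + θ) /
          (1 + θ * gibbs N β b (fun σ => (σ i : ℝ) * (σ j : ℝ))) with hS
    have e1 : (1 / (N : ℝ)) * (poissonPMF (α * N) (k + 1) *
        ((((k : ℝ) + 1) * S) / (((N : ℝ) ^ 2) ^ k * (N : ℝ) ^ 2)))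
        = (poissonPMF (α * N) (k + 1) * ((k : ℝ) + 1)) *
          (S / (((N : ℝ) ^ 2) ^ k * (N : ℝ) ^ 2 * N)) := by
      ring
    push_cast
    rw [e1, hp]
    field_simp
  have hval : (1 / (N : ℝ)) * ∑' k, gAux' N α k β
      = α * quenched N α (fun _ b =>
          (1 / (N : ℝ) ^ 2) * ∑ i : Fin N, ∑ j : Fin N,
            (gibbs N β b (fun σ => (σ i : ℝ) * (σ j : ℝ)) + θ) /
              (1 + θ * gibbs N β b (fun σ => (σ i : ℝ) * (σ j : ℝ)))) := by
    calc (1 / (N : ℝ)) * ∑' k, gAux' N α k β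
        = ∑' k, (1 / (N : ℝ)) * gAux' N α k β := by rw [← tsum_mul_left]
      _ = ∑' k, (1 / (N : ℝ)) * gAux' N α (k + 1) β := by
          rw [Summable.tsum_eq_zero_add (hsumm'.mul_left _)]
          simp [h0]
      _ = ∑' k, α * (poissonPMF (α * N) k *
            ((∑ b : Fin k → Fin N × Fin N, (1 / (N : ℝ) ^ 2) * ∑ i : Fin N, ∑ j : Fin N,
              (gibbs N β b (fun σ => (σ i : ℝ) * (σ j : ℝ)) + θ) /
                (1 + θ * gibbs N β b (fun σ => (σ i : ℝ) * (σ j : ℝ)))) /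
              ((N : ℝ) ^ 2) ^ k)) := tsum_congr hkey
      _ = _ := by rw [tsum_mul_left]; rfl
  rw [show (fun β' : ℝ =>
      (1 / (N : ℝ)) * quenched N α (fun _ b => Real.log (Zdil N β' b)))
      = fun y => (1 / (N : ℝ)) * ∑' k, gAux N α k y from rfl, ← hval]
  exact H2
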